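/- For all integers n ≥ 4 and all integers k with 2 ≤ k ≤ n, one has t_p(2n+3, k) · binom(n, k) ≤ t_p(2n+3, k+1) · binom(n, k−1). (Equivalently, with c(n) = 2n+3 and g(k) = k+1, the ratio t_p(c(n), g(k)) / binom(n,k) is nondecreasing in k for 1 ≤ k ≤ n.) -/
import Mathlib


/-- `tpKnot c g` is t_p(c,g), the number of words of palindromic type representing
2-bridge knots of crossing number `c` and genus `g`, given by the explicit formula
t_p(c,g) = (-1)^(c'-g-1) * Σ_{n=0}^{c'-g-1} (-1)^n * binom(n+g-1, n) with
c' = ⌊(c+1)/2⌋, the sum being empty when c' - g - 1 < 0, and t_p(c,0) = 0. -/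
def tpKnot (c g : ℕ) : ℤ :=
  if g = 0 then 0
  else (-1 : ℤ) ^ ((c + 1) / 2 - g - 1) *
    ∑ n ∈ Finset.range ((c + 1) / 2 - g), (-1 : ℤ) ^ n * (Nat.choose (n + g - 1) n)

namespace TPaux

def t (n g : ℕ) : ℤ := tpKnot (2 * n + 3) g

lemma t_def (n g : ℕ) (hg : g ≠ 0) :
    t n g = (-1 : ℤ) ^ (n + 1 - g) *
      ∑ m ∈ Finset.range (n + 2 - g), (-1 : ℤ) ^ m * (Nat.choose (m + g - 1) m) := by
  have h1 : (2 * n + 3 + 1) / 2 - g - 1 = n + 1 - g := by omega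
  have h2 : (2 * n + 3 + 1) / 2 - g = n + 2 - g := by omega
  rw [t, tpKnot, if_neg hg, h1, h2]

lemma t_zero (n g : ℕ) (h : n + 2 ≤ g) : t n g = 0 := by
  have hg : g ≠ 0 := by omega
  rw [t_def n g hg]
  have : n + 2 - g = 0 := by omega
  simp [this]

lemma t_zero' (n : ℕ) : t n 0 = 0 := by simp [t, tpKnot]

lemma tR (n g : ℕ) (hg : 1 ≤ g) :
    t (n + 1) g = (Nat.choose (n + 1) (g - 1) : ℤ) - t n g := by
  rcases le_or_gt g (n + 1) with h | h
  · rw [t_def n g (by omega), t_def (n + 1) g (by omega)]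
    have e5 : n + 2 - g = (n + 1 - g) + 1 := by omega
    have e1 : n + 1 + 2 - g = ((n + 1 - g) + 1) + 1 := by omega
    have e2 : n + 1 + 1 - g = (n + 1 - g) + 1 := by omega
    rw [e5, e1, Finset.sum_range_succ]
    have e3 : n + 1 - g + 1 + g - 1 = n + 1 := by omega
    have e4 : Nat.choose (n + 1) (n + 1 - g + 1) = Nat.choose (n + 1) (g - 1) := by
      rw [← Nat.choose_symm (show n + 1 - g + 1 ≤ n + 1 by omega)]
      congr 1
      omega
    rw [e3, e4]
    have hs : (-1 : ℤ) ^ (n + 1 - g) * (-1 : ℤ) ^ (n + 1 - g) = 1 := by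
      rw [← pow_add]
      exact Even.neg_one_pow ⟨n + 1 - g, by ring⟩
    linear_combination ((Nat.choose (n + 1) (g - 1) : ℤ)) * hs
  · rcases eq_or_lt_of_le (show n + 2 ≤ g by omega) with h2 | h2
    · rw [t_zero n g (by omega), t_def (n + 1) g (by omega)]
      have e1 : n + 1 + 2 - g = 1 := by omega
      have e2 : n + 1 + 1 - g = 0 := by omega
      have e3 : Nat.choose (n + 1) (g - 1) = 1 := by
        have : g - 1 = n + 1 := by omega
        simp [this]
      rw [e1, e2, e3]
      simp
    · rw [t_zero n g (by omega), t_zero (n + 1) g (by omega),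
        Nat.choose_eq_zero_of_lt (show n + 1 < g - 1 by omega)]
      simp

lemma tF (n g : ℕ) (hg : 1 ≤ g) :
    2 * t n (g + 1) + t n g = (Nat.choose (n + 1) g : ℤ) := by
  induction n with
  | zero =>
    rcases eq_or_lt_of_le hg with h | h
    · subst h
      rw [t_zero 0 2 (by omega), t_def 0 1 (by omega)]
      norm_num
    · rw [t_zero 0 (g + 1) (by omega), t_zero 0 g (by omega),
        Nat.choose_eq_zero_of_lt (show 1 < g by omega)]
      simp
  | succ n ih =>
    rw [tR n (g + 1) (by omega), tR n g hg]
    have e1 : g + 1 - 1 = g := by omega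
    rw [e1]
    have e2 : Nat.choose (n + 2) g = Nat.choose (n + 1) (g - 1) + Nat.choose (n + 1) g := by
      have : g = (g - 1) + 1 := by omega
      rw [this]
      exact Nat.choose_succ_succ (n + 1) (g - 1)
    rw [e2]
    push_cast
    linarith

lemma tPascal (n g : ℕ) (hg : 2 ≤ g) : t (n + 1) g = t n g + t n (g - 1) := by
  have h := tF n (g - 1) (by omega)
  have e : g - 1 + 1 = g := by omega
  rw [e] at h
  rw [tR n g (by omega)]
  linarith

lemma t_one (n : ℕ) : t n 1 = if n % 2 = 0 then 1 else 0 := by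
  induction n with
  | zero => rw [t_def 0 1 (by omega)]; norm_num
  | succ n ih =>
    rw [tR n 1 le_rfl, ih]
    rcases Nat.even_or_odd n with h | h
    · have h1 : n % 2 = 0 := Nat.even_iff.mp h
      have h2 : (n + 1) % 2 = 1 := by omega
      simp [h1, h2]
    · have h1 : n % 2 = 1 := Nat.odd_iff.mp h
      have h2 : (n + 1) % 2 = 0 := by omega
      simp [h1, h2]

lemma t_nonneg (n : ℕ) : ∀ g, 0 ≤ t n g := by
  induction n with
  | zero =>
    intro g
    match g with
    | 0 => rw [t_zero']
    | 1 => rw [t_def 0 1 (by omega)]; norm_num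
    | (g + 2) => rw [t_zero 0 (g + 2) (by omega)]
  | succ n ih =>
    intro g
    match g with
    | 0 => rw [t_zero']
    | 1 => rw [t_one]; split <;> norm_num
    | (g + 2) =>
      rw [tPascal n (g + 2) (by omega)]
      have := ih (g + 2)
      have := ih (g + 2 - 1)
      linarith


lemma t41 : t 4 1 = 1 := by rw [t_one]; norm_num
lemma t42 : t 4 2 = 2 := by
  have h := tF 4 1 (by omega)
  rw [t41, show Nat.choose 5 1 = 5 from by decide] at h; push_cast at h; linarith
lemma t43 : t 4 3 = 4 := by
  have h := tF 4 2 (by omega)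
  rw [t42, show Nat.choose 5 2 = 10 from by decide] at h; push_cast at h; linarith
lemma t44 : t 4 4 = 3 := by
  have h := tF 4 3 (by omega)
  rw [t43, show Nat.choose 5 3 = 10 from by decide] at h; push_cast at h; linarith
lemma t45 : t 4 5 = 1 := by
  have h := tF 4 4 (by omega)
  rw [t44, show Nat.choose 5 4 = 5 from by decide] at h; push_cast at h; linarith

lemma t_pos : ∀ n, 4 ≤ n → ∀ g, 2 ≤ g → g ≤ n + 1 → 0 < t n g := by
  intro n hn
  induction n, hn using Nat.le_induction with
  | base =>
    intro g hg hg'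
    interval_cases g
    · rw [t42]; norm_num
    · rw [t43]; norm_num
    · rw [t44]; norm_num
    · rw [t45]; norm_num
  | succ n hn ih =>
    intro g hg hg'
    rcases eq_or_lt_of_le hg with h | h
    · subst h
      rw [tPascal n 2 (by omega)]
      have h1 := ih 2 (by omega) (by omega)
      have h2 : 0 ≤ t n (2 - 1) := t_nonneg n 1
      linarith
    · rw [tPascal n g (by omega)]
      have h1 := ih (g - 1) (by omega) (by omega)
      have h2 : 0 ≤ t n g := t_nonneg n g
      linarith

lemma two_choose_two (n : ℕ) : 2 * (Nat.choose n 2 : ℤ) = n * n - n := by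
  induction n with
  | zero => norm_num
  | succ n ih =>
    have : Nat.choose (n + 1) 2 = Nat.choose n 1 + Nat.choose n 2 :=
      Nat.choose_succ_succ n 1
    rw [this]
    push_cast
    rw [Nat.choose_one_right]
    push_cast
    linarith

lemma D2 (n : ℕ) (hn : 4 ≤ n) :
    t n 2 * (Nat.choose n 2 : ℤ) ≤ t n 3 * (Nat.choose n 1 : ℤ) := by
  have h1 := tF n 1 (by omega)
  have h2 := tF n 2 (by omega)
  have ha : 0 ≤ t n 1 := t_nonneg n 1
  have hC2 := two_choose_two n
  have hCp : (Nat.choose (n + 1) 2 : ℤ) = (Nat.choose n 2 : ℤ) + n := by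
    have : Nat.choose (n + 1) 2 = Nat.choose n 1 + Nat.choose n 2 :=
      Nat.choose_succ_succ n 1
    rw [this, Nat.choose_one_right]
    push_cast
    ring
  rw [hCp] at h2
  rw [Nat.choose_one_right] at h1 ⊢
  push_cast at h1 ⊢
  have key : 4 * (t n 3 * (n : ℤ) - t n 2 * (Nat.choose n 2 : ℤ)) =
      t n 1 * ((n : ℤ) * n) := by
    linear_combination (2 * (n : ℤ)) * h2 - ((n : ℤ) + 2 * (Nat.choose n 2 : ℤ)) * h1 +
      (t n 1 - 1) * hC2
  have : 0 ≤ t n 1 * ((n : ℤ) * n) := by positivity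
  linarith

lemma main : ∀ n, 4 ≤ n → ∀ k, 2 ≤ k →
    t n k * (Nat.choose n k : ℤ) ≤ t n (k + 1) * (Nat.choose n (k - 1) : ℤ) := by
  intro n hn
  induction n, hn using Nat.le_induction with
  | base =>
    intro k hk
    rcases le_or_gt k 4 with h | h
    · interval_cases k
      · rw [t42, t43, show Nat.choose 4 2 = 6 from by decide,
          show Nat.choose 4 1 = 4 from by decide]; norm_num
      · rw [t43, t44, show Nat.choose 4 3 = 4 from by decide,
          show Nat.choose 4 2 = 6 from by decide]; norm_num
      · rw [t44, t45, show Nat.choose 4 4 = 1 from by decide,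
          show Nat.choose 4 3 = 4 from by decide]; norm_num
    · rw [Nat.choose_eq_zero_of_lt h]
      have h1 : 0 ≤ t 4 (k + 1) := t_nonneg 4 (k + 1)
      have h2 : (0 : ℤ) ≤ (Nat.choose 4 (k - 1) : ℤ) := by positivity
      simp only [Nat.cast_zero, mul_zero]
      exact mul_nonneg h1 h2
  | succ n hn ih =>
    intro k hk
    rcases eq_or_lt_of_le hk with h | h
    · subst h
      exact D2 (n + 1) (by omega)
    · -- 3 ≤ k
      have hk3 : 3 ≤ k := h
      have hP1 : t (n + 1) (k + 1) = t n (k + 1) + t n k := by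
        have := tPascal n (k + 1) (by omega)
        simpa using this
      have hP0 : t (n + 1) k = t n k + t n (k - 1) := tPascal n k (by omega)
      have hc1 : (Nat.choose (n + 1) k : ℤ) =
          (Nat.choose n k : ℤ) + (Nat.choose n (k - 1) : ℤ) := by
        have e := Nat.choose_succ_succ n (k - 1)
        simp only [Nat.succ_eq_add_one] at e
        rw [show k - 1 + 1 = k from by omega] at e
        rw [e]
        push_cast
        ring
      have hc0 : (Nat.choose (n + 1) (k - 1) : ℤ) =
          (Nat.choose n (k - 1) : ℤ) + (Nat.choose n (k - 2) : ℤ) := by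
        have e := Nat.choose_succ_succ n (k - 2)
        simp only [Nat.succ_eq_add_one] at e
        rw [show k - 2 + 1 = k - 1 from by omega] at e
        rw [e]
        push_cast
        ring
      have h1 := ih k hk
      have h2 : t n (k - 1) * (Nat.choose n (k - 1) : ℤ) ≤
          t n k * (Nat.choose n (k - 2) : ℤ) := by
        have := ih (k - 1) (by omega)
        have e1 : k - 1 + 1 = k := by omega
        have e2 : k - 1 - 1 = k - 2 := by omega
        rwa [e1, e2] at this
      have hE : t n (k - 1) * (Nat.choose n k : ℤ) ≤
          t n (k + 1) * (Nat.choose n (k - 2) : ℤ) := by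
        rcases le_or_gt k n with hkn | hkn
        · have p1 : 0 < t n k := t_pos n (by omega) k hk (by omega)
          have p2 : (0 : ℤ) < (Nat.choose n (k - 1) : ℤ) := by
            exact_mod_cast Nat.choose_pos (by omega : k - 1 ≤ n)
          have q1 : 0 ≤ t n k * (Nat.choose n k : ℤ) := by
            have := t_nonneg n k; positivity
          have q2 : 0 ≤ t n k * (Nat.choose n (k - 2) : ℤ) := by
            have := t_nonneg n k; positivity
          have Q := mul_le_mul h2 h1 q1 q2
          have hpos : 0 < t n k * (Nat.choose n (k - 1) : ℤ) := mul_pos p1 p2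
          have P : (t n (k - 1) * (Nat.choose n k : ℤ)) *
                (t n k * (Nat.choose n (k - 1) : ℤ)) ≤
              (t n (k + 1) * (Nat.choose n (k - 2) : ℤ)) *
                (t n k * (Nat.choose n (k - 1) : ℤ)) := by nlinarith [Q]
          exact le_of_mul_le_mul_right P hpos
        · rw [Nat.choose_eq_zero_of_lt hkn]
          have h1' : 0 ≤ t n (k + 1) := t_nonneg n (k + 1)
          have h2' : (0 : ℤ) ≤ (Nat.choose n (k - 2) : ℤ) := by positivity
          simp only [Nat.cast_zero, mul_zero]
          exact mul_nonneg h1' h2'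
      rw [hP1, hP0, hc1, hc0]
      nlinarith [h1, h2, hE]

end TPaux

/-- For all integers n ≥ 4 and all k with 2 ≤ k ≤ n,
t_p(2n+3, k) · binom(n, k) ≤ t_p(2n+3, k+1) · binom(n, k−1); equivalently, with
c(n) = 2n+3 and g(k) = k+1, the ratio t_p(c(n), g(k)) / binom(n,k) is nondecreasing
in k for 1 ≤ k ≤ n. -/
theorem tpKnot_ratio_mono (n k : ℕ) (hn : 4 ≤ n) (hk : 2 ≤ k) (hkn : k ≤ n) :
    tpKnot (2 * n + 3) k * (Nat.choose n k : ℤ) ≤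
      tpKnot (2 * n + 3) (k + 1) * (Nat.choose n (k - 1) : ℤ) := by
  exact TPaux.main n hn k hk
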